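/- arXiv:0911.3253 — 2 statements merged into one kernel-verified Lean document; each statement's English description precedes it below -/
import Mathlib

section
/- Let λ = (λ_1, λ_2) with λ_2 > 0 and d = λ_1 − λ_2. For a partitioning U = (U_1,...,U_ℓ) of {1,...,λ_1+λ_2} into ℓ (possibly empty) blocks, exactly d of odd cardinality, define R(U) = ∏_blocks ∏ (y_{u_{2i−1}} − y_{u_{2i}}) pairing up consecutive elements of each block in increasing order (dropping a leftover element in odd blocks). Then for any such U, the polynomial R(U)·(y_1 + ... + y_{λ_1+λ_2} − d·y_{λ_1+λ_2+1}), after dropping all non-square-free monomials, equals R(U)·(∑_a (y_a − y_{λ_1+λ_2+1})), where a runs over the largest elements of the odd-cardinality blocks of U. -/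
open MvPolynomial Finset

noncomputable section

/-- The "square-free map" dropping all non-square-free monomials of a polynomial. -/
def SF (p : MvPolynomial ℕ ℂ) : MvPolynomial ℕ ℂ :=
  ∑ d ∈ p.support.filter (fun d => ∀ i ∈ d.support, d i ≤ 1),
    monomial d (coeff d p)

/-- `R` of a block `{u_1 < u_2 < … < u_r}`:
`(y_{u_1} - y_{u_2})(y_{u_3} - y_{u_4}) ⋯ (y_{u_{2⌊r/2⌋-1}} - y_{u_{2⌊r/2⌋}})`. -/
def Rblock (B : Finset ℕ) : MvPolynomial ℕ ℂ :=
  ∏ i ∈ Finset.range (B.card / 2),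
    (X ((B.sort (· ≤ ·)).getD (2 * i) 0) - X ((B.sort (· ≤ ·)).getD (2 * i + 1) 0))

/-- `R(U)`: the product of the `R`-polynomials of the blocks of `U`. -/
def RU {l : ℕ} (U : Fin l → Finset ℕ) : MvPolynomial ℕ ℂ :=
  ∏ j, Rblock (U j)

lemma coeff_SF (p : MvPolynomial ℕ ℂ) (d : ℕ →₀ ℕ) :
    coeff d (SF p) = if (∀ i ∈ d.support, d i ≤ 1) then coeff d p else 0 := by
  classical
  unfold SF
  rw [coeff_sum]
  simp_rw [coeff_monomial]
  rw [Finset.sum_ite_eq' _ d (fun d' => coeff d' p)]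
  by_cases hs : (∀ i ∈ d.support, d i ≤ 1)
  · by_cases hd : coeff d p = 0 <;>
      simp [Finset.mem_filter, mem_support_iff, hd, hs]
  · have hs' : ¬ (∀ (i : ℕ), ¬d i = 0 → d i ≤ 1) := by
      simpa [Finsupp.mem_support_iff] using hs
    simp [Finset.mem_filter, hs']

/-- `SF` as an additive monoid homomorphism. -/
def SFh : MvPolynomial ℕ ℂ →+ MvPolynomial ℕ ℂ where
  toFun := SF
  map_zero' := by ext d; simp [coeff_SF]
  map_add' p q := by
    ext d
    simp only [coeff_SF, coeff_add]
    split <;> simp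

lemma SF_eq_self (p : MvPolynomial ℕ ℂ)
    (h : ∀ d ∈ p.support, ∀ i ∈ d.support, d i ≤ 1) : SF p = p := by
  ext d
  rw [coeff_SF]
  split_ifs with hs
  · rfl
  · by_contra hc
    have hd : d ∈ p.support := mem_support_iff.mpr fun h0 => hc (by rw [h0])
    exact hs (h d hd)

lemma SF_sq_mul (a : ℕ) (q : MvPolynomial ℕ ℂ) : SF (X a ^ 2 * q) = 0 := by
  ext d
  rw [coeff_SF, coeff_zero]
  split_ifs with h
  · rw [X_pow_eq_monomial, coeff_monomial_mul']
    split_ifs with h2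
    · exfalso
      have h2a : 2 ≤ d a := by simpa using (Finsupp.single_le_iff).mp h2
      have ha : a ∈ d.support := Finsupp.mem_support_iff.mpr (by omega)
      have := h a ha
      omega
    · rfl
  · rfl

lemma sum_range_two_mul {M : Type*} [AddCommMonoid M] (m : ℕ) (f : ℕ → M) :
    ∑ k ∈ Finset.range (2 * m), f k = ∑ i ∈ Finset.range m, (f (2 * i) + f (2 * i + 1)) := by
  induction m with
  | zero => simp
  | succ n ih =>
    have h : 2 * (n + 1) = (2 * n + 1) + 1 := by ring
    rw [h, Finset.sum_range_succ, Finset.sum_range_succ, ih, Finset.sum_range_succ, add_assoc]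

lemma sum_finset_eq_sum_range {M : Type*} [AddCommMonoid M] (B : Finset ℕ) (f : ℕ → M) :
    ∑ x ∈ B, f x =
      ∑ k ∈ Finset.range B.card, f ((B.sort (· ≤ ·)).getD k 0) := by
  classical
  set L := B.sort (· ≤ ·) with hL
  have h1 : B = L.toFinset := by simp [hL]
  have h2 : L.Nodup := B.sort_nodup _
  rw [h1, List.sum_toFinset f h2]
  have h3 : (L.map f).sum = ∑ i : Fin L.length, f L[(i : ℕ)] := (Fin.sum_univ_fun_getElem L f).symm
  rw [h3]
  have h4 : B.card = L.length := (B.length_sort _).symm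
  rw [show L.toFinset.card = L.length by rw [← h1, h4]]
  rw [← Fin.sum_univ_eq_sum_range (fun k => f (L.getD k 0)) L.length]
  exact Finset.sum_congr rfl fun i _ => by rw [List.getD_eq_getElem L 0 i.2]

lemma sum_block {M : Type*} [AddCommMonoid M] (B : Finset ℕ) (f : ℕ → M) :
    ∑ x ∈ B, f x =
      (∑ i ∈ Finset.range (B.card / 2),
        (f ((B.sort (· ≤ ·)).getD (2 * i) 0) + f ((B.sort (· ≤ ·)).getD (2 * i + 1) 0))) +
      (if Odd B.card then f (WithBot.unbotD 0 B.max) else 0) := by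
  classical
  set L := B.sort (· ≤ ·) with hL
  rw [sum_finset_eq_sum_range]
  have hle : 2 * (B.card / 2) ≤ B.card := Nat.mul_div_le B.card 2 |>.trans_eq rfl
  rw [Finset.range_eq_Ico, ← Finset.sum_Ico_consecutive _ (Nat.zero_le (2 * (B.card / 2))) hle,
    ← Finset.range_eq_Ico, sum_range_two_mul]
  congr 1
  rcases Nat.even_or_odd B.card with he | ho
  · have he' := Nat.even_iff.mp he
    have : 2 * (B.card / 2) = B.card := by omega
    rw [this]
    simp [Nat.odd_iff, he']
  · have ho' := Nat.odd_iff.mp ho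
    have hc : 2 * (B.card / 2) = B.card - 1 := by omega
    have hpos : 0 < B.card := by omega
    have hne : B.Nonempty := Finset.card_pos.mp hpos
    have hico : Finset.Ico (B.card - 1) B.card = {B.card - 1} := by
      ext x; simp only [Finset.mem_Ico, Finset.mem_singleton]; omega
    rw [hc, hico, Finset.sum_singleton, if_pos ho]
    congr 1
    have hlen : L.length = B.card := B.length_sort _
    have hlt : L.length - 1 < L.length := by omega
    rw [show B.card - 1 = L.length - 1 by omega, List.getD_eq_getElem L 0 hlt]
    rw [Finset.sorted_last_eq_max'_aux B hlt hne, ← Finset.coe_max' hne, WithBot.unbotD_coe]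

lemma support_prod_pairs {ι : Type*} [DecidableEq ι] (T : Finset ι) (a b : ι → ℕ)
    (hd : ∀ e ∈ T, ∀ e' ∈ T, e ≠ e' →
      ∀ x ∈ ({a e, b e} : Finset ℕ), x ∉ ({a e', b e'} : Finset ℕ)) :
    ∀ d ∈ (∏ e ∈ T, (X (a e) - X (b e) : MvPolynomial ℕ ℂ)).support, ∀ x : ℕ,
      d x ≤ if x ∈ T.biUnion (fun e => ({a e, b e} : Finset ℕ)) then 1 else 0 := by
  classical
  induction T using Finset.induction_on with
  | empty =>
    intro d hdm x
    rw [Finset.prod_empty] at hdm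
    have : d = 0 := by
      by_contra h
      exact (MvPolynomial.mem_support_iff.mp hdm)
        (by rw [MvPolynomial.coeff_one, if_neg (fun h0 => h h0.symm)])
    simp [this]
  | @insert e T he ih =>
    intro d hdm x
    rw [Finset.prod_insert he] at hdm
    obtain ⟨u, hu, v, hv, rfl⟩ := Finset.mem_add.mp (MvPolynomial.support_mul _ _ hdm)
    have hu' : u = Finsupp.single (a e) 1 ∨ u = Finsupp.single (b e) 1 := by
      have := MvPolynomial.support_sub ℕ (X (a e)) (X (b e)) hu
      rw [Finset.mem_union, MvPolynomial.support_X, MvPolynomial.support_X] at this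
      simpa using this
    have ihv : ∀ y : ℕ, v y ≤ if y ∈ T.biUnion (fun e => ({a e, b e} : Finset ℕ)) then 1 else 0 :=
      ih (fun e1 h1 e2 h2 hne => hd e1 (Finset.mem_insert_of_mem h1) e2
        (Finset.mem_insert_of_mem h2) hne) v hv
    obtain ⟨c, hc, rfl⟩ : ∃ c, c ∈ ({a e, b e} : Finset ℕ) ∧ u = Finsupp.single c 1 := by
      rcases hu' with h | h
      · exact ⟨a e, by simp, h⟩
      · exact ⟨b e, by simp, h⟩
    rw [Finsupp.add_apply]
    by_cases hx : x = c
    · subst hx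
      have hx1 : (Finsupp.single x 1 : ℕ →₀ ℕ) x = 1 := Finsupp.single_eq_same
      have hxnot : x ∉ T.biUnion (fun e => ({a e, b e} : Finset ℕ)) := by
        rw [Finset.mem_biUnion]
        rintro ⟨e', he', hxe'⟩
        exact hd e (Finset.mem_insert_self e T) e' (Finset.mem_insert_of_mem he')
          (fun h => he (h ▸ he')) x hc hxe'
      have hv0 : v x = 0 := Nat.le_zero.mp (by simpa [hxnot] using ihv x)
      have hxin : x ∈ (insert e T).biUnion (fun e => ({a e, b e} : Finset ℕ)) :=
        Finset.mem_biUnion.mpr ⟨e, Finset.mem_insert_self e T, hc⟩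
      rw [hx1, hv0, if_pos hxin]
    · have hx0 : (Finsupp.single c 1 : ℕ →₀ ℕ) x = 0 := Finsupp.single_eq_of_ne' (Ne.symm hx)
      rw [hx0, zero_add]
      refine (ihv x).trans ?_
      by_cases hxT : x ∈ T.biUnion (fun e => ({a e, b e} : Finset ℕ))
      · have hxI : x ∈ (insert e T).biUnion (fun e => ({a e, b e} : Finset ℕ)) := by
          rw [Finset.mem_biUnion] at hxT ⊢
          obtain ⟨e', he', h⟩ := hxT
          exact ⟨e', Finset.mem_insert_of_mem he', h⟩
        rw [if_pos hxT, if_pos hxI]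
      · rw [if_neg hxT]
        exact Nat.zero_le _

/-- Lemma on the square-free map: for a partitioning `U` of `{1,…,λ₁+λ₂}` into `ℓ`
(possibly empty) blocks, exactly `d = λ₁ - λ₂` of odd cardinality, we have
`SF(R(U)·(y_1 + … + y_{λ₁+λ₂} - d·y_{λ₁+λ₂+1})) = R(U)·∑_a (y_a - y_{λ₁+λ₂+1})`,
where `a` runs over the largest elements of the odd-cardinality blocks of `U`.
(Indices are 0-based: the variables of `ℂ[y]` are `y_0, y_1, …`, the set being
partitioned is `{0,…,n-1}` with `n = λ₁ + λ₂`, and the new variable is `y_n`.) -/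
theorem SF_RU_mul_eq
    (lam1 lam2 l : ℕ) (hlam : lam2 ≤ lam1) (hlam2 : 0 < lam2)
    (U : Fin l → Finset ℕ)
    (hdisj : ∀ i j, i ≠ j → Disjoint (U i) (U j))
    (hcover : Finset.univ.biUnion U = Finset.range (lam1 + lam2))
    (hodd : (Finset.univ.filter fun j => Odd (U j).card).card = lam1 - lam2) :
    SF (RU U * ((∑ i ∈ Finset.range (lam1 + lam2), X i) -
        C ((lam1 - lam2 : ℕ) : ℂ) * X (lam1 + lam2))) =
      RU U * ∑ j ∈ Finset.univ.filter (fun j => Odd (U j).card),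
        (X (WithBot.unbotD 0 (U j).max) - X (lam1 + lam2)) := by
  classical
  set n := lam1 + lam2 with hn
  set A : (Σ _ : Fin l, ℕ) → ℕ := fun e => ((U e.1).sort (· ≤ ·)).getD (2 * e.2) 0 with hA
  set Bf : (Σ _ : Fin l, ℕ) → ℕ := fun e => ((U e.1).sort (· ≤ ·)).getD (2 * e.2 + 1) 0 with hBf
  set S : Finset (Σ _ : Fin l, ℕ) :=
    Finset.univ.sigma fun j => Finset.range ((U j).card / 2) with hS
  set F : Finset (Fin l) := Finset.univ.filter (fun j => Odd (U j).card) with hF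
  -- entries of the sorted lists
  have hentry_mem : ∀ (j : Fin l) (k : ℕ), k < (U j).card →
      ((U j).sort (· ≤ ·)).getD k 0 ∈ U j := by
    intro j k hk
    have hlen : k < ((U j).sort (· ≤ ·)).length := by rwa [Finset.length_sort]
    rw [List.getD_eq_getElem _ 0 hlen]
    exact (Finset.mem_sort (· ≤ ·)).mp (List.getElem_mem _)
  have hentry_inj : ∀ (j : Fin l) (k k' : ℕ), k < (U j).card → k' < (U j).card → k ≠ k' →
      ((U j).sort (· ≤ ·)).getD k 0 ≠ ((U j).sort (· ≤ ·)).getD k' 0 := by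
    intro j k k' hk hk' hne
    have hlen : k < ((U j).sort (· ≤ ·)).length := by rwa [Finset.length_sort]
    have hlen' : k' < ((U j).sort (· ≤ ·)).length := by rwa [Finset.length_sort]
    rw [List.getD_eq_getElem _ 0 hlen, List.getD_eq_getElem _ 0 hlen']
    intro h
    exact hne (((U j).sort_nodup (· ≤ ·)).getElem_inj_iff.mp h)
  -- pairwise disjointness of the pairs
  have hpairs : ∀ e ∈ S, ∀ e' ∈ S, e ≠ e' →
      ∀ x ∈ ({A e, Bf e} : Finset ℕ), x ∉ ({A e', Bf e'} : Finset ℕ) := by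
    rintro ⟨j, i⟩ hSe ⟨j', i'⟩ hSe' hne x hx hx'
    rw [hS, Finset.mem_sigma, Finset.mem_range] at hSe hSe'
    have hi : i < (U j).card / 2 := hSe.2
    have hi' : i' < (U j').card / 2 := hSe'.2
    simp only [Finset.mem_insert, Finset.mem_singleton, hA, hBf] at hx hx'
    obtain ⟨k, hk1, hk2, rfl⟩ : ∃ k, k < (U j).card ∧ (k = 2 * i ∨ k = 2 * i + 1) ∧
        x = ((U j).sort (· ≤ ·)).getD k 0 := by
      rcases hx with h | h
      · exact ⟨2 * i, by omega, Or.inl rfl, h⟩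
      · exact ⟨2 * i + 1, by omega, Or.inr rfl, h⟩
    by_cases hjj : j = j'
    · subst hjj
      have hii : i ≠ i' := by
        intro h; exact hne (by rw [h])
      rcases hx' with h | h
      · exact hentry_inj j k (2 * i') hk1 (by omega) (by omega) h
      · exact hentry_inj j k (2 * i' + 1) hk1 (by omega) (by omega) h
    · have hxj : ((U j).sort (· ≤ ·)).getD k 0 ∈ U j := hentry_mem j k hk1
      have hxj' : ((U j).sort (· ≤ ·)).getD k 0 ∈ U j' := by
        rcases hx' with h | h
        · rw [h]; exact hentry_mem j' (2 * i') (by omega)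
        · rw [h]; exact hentry_mem j' (2 * i' + 1) (by omega)
      exact (Finset.disjoint_left.mp (hdisj j j' hjj) hxj) hxj'
  -- RU as a product over the sigma type
  have hRU : RU U = ∏ e ∈ S, (X (A e) - X (Bf e)) := by
    rw [RU]
    unfold Rblock
    exact (Finset.prod_sigma Finset.univ (fun j => Finset.range ((U j).card / 2))
      (fun e => (X (A e) - X (Bf e) : MvPolynomial ℕ ℂ))).symm
  have hsupp := support_prod_pairs S A Bf hpairs
  rw [← hRU] at hsupp
  -- the paired elements lie in range n
  have hVmem : ∀ x ∈ S.biUnion (fun e => ({A e, Bf e} : Finset ℕ)), x ∈ Finset.range n := by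
    intro x hx
    obtain ⟨⟨j, i⟩, hSe, hx⟩ := Finset.mem_biUnion.mp hx
    rw [hS, Finset.mem_sigma, Finset.mem_range] at hSe
    have hi : i < (U j).card / 2 := hSe.2
    simp only [Finset.mem_insert, Finset.mem_singleton, hA, hBf] at hx
    have hxU : x ∈ U j := by
      rcases hx with h | h
      · rw [h]; exact hentry_mem j (2 * i) (by omega)
      · rw [h]; exact hentry_mem j (2 * i + 1) (by omega)
    rw [← hcover]
    exact Finset.mem_biUnion.mpr ⟨j, Finset.mem_univ j, hxU⟩
  have hn_not : n ∉ S.biUnion (fun e => ({A e, Bf e} : Finset ℕ)) := by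
    intro h
    exact absurd (hVmem n h) (by simp)
  have hmax_not : ∀ j₀ ∈ F, (WithBot.unbotD 0 (U j₀).max) ∉ S.biUnion (fun e => ({A e, Bf e} : Finset ℕ)) := by
    intro j₀ hj₀ hmem
    rw [hF, Finset.mem_filter] at hj₀
    have ho := hj₀.2
    have ho' := Nat.odd_iff.mp ho
    have hpos : 0 < (U j₀).card := by omega
    have hneB : (U j₀).Nonempty := Finset.card_pos.mp hpos
    have hlen : ((U j₀).sort (· ≤ ·)).length = (U j₀).card := (U j₀).length_sort _
    have hlt : ((U j₀).sort (· ≤ ·)).length - 1 < ((U j₀).sort (· ≤ ·)).length := by omega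
    have hm : WithBot.unbotD 0 (U j₀).max = ((U j₀).sort (· ≤ ·)).getD ((U j₀).card - 1) 0 := by
      rw [show (U j₀).card - 1 = ((U j₀).sort (· ≤ ·)).length - 1 by omega,
        List.getD_eq_getElem _ 0 hlt, Finset.sorted_last_eq_max'_aux (U j₀) hlt hneB,
        ← Finset.coe_max' hneB, WithBot.unbotD_coe]
    obtain ⟨⟨j, i⟩, hSe, hx⟩ := Finset.mem_biUnion.mp hmem
    rw [hS, Finset.mem_sigma, Finset.mem_range] at hSe
    have hi : i < (U j).card / 2 := hSe.2
    simp only [Finset.mem_insert, Finset.mem_singleton, hA, hBf] at hx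
    obtain ⟨k, hk1, hk2, hxv⟩ : ∃ k, k < (U j).card ∧ (k = 2 * i ∨ k = 2 * i + 1) ∧
        WithBot.unbotD 0 (U j₀).max = ((U j).sort (· ≤ ·)).getD k 0 := by
      rcases hx with h | h
      · exact ⟨2 * i, by omega, Or.inl rfl, h⟩
      · exact ⟨2 * i + 1, by omega, Or.inr rfl, h⟩
    by_cases hjj : j = j₀
    · subst hjj
      have hklt : k < (U j).card - 1 := by omega
      exact hentry_inj j ((U j).card - 1) k (by omega) hk1 (by omega) (by rw [← hm, ← hxv])
    · have h1 : WithBot.unbotD 0 (U j₀).max ∈ U j₀ := by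
        rw [hm]; exact hentry_mem j₀ ((U j₀).card - 1) (by omega)
      have h2 : WithBot.unbotD 0 (U j₀).max ∈ U j := by
        rw [hxv]; exact hentry_mem j k hk1
      exact (Finset.disjoint_left.mp (hdisj j j₀ hjj) h2) h1
  -- squarefreeness facts about monomials of RU U
  have hRUsq : ∀ d ∈ (RU U).support, (∀ x : ℕ, d x ≤ 1) ∧ d n = 0 ∧
      ∀ j₀ ∈ F, d (WithBot.unbotD 0 (U j₀).max) = 0 := by
    intro d hd
    refine ⟨fun x => ?_, ?_, fun j₀ hj₀ => ?_⟩
    · refine (hsupp d hd x).trans ?_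
      split_ifs <;> omega
    · have := hsupp d hd n
      rwa [if_neg hn_not, Nat.le_zero] at this
    · have := hsupp d hd (WithBot.unbotD 0 (U j₀).max)
      rwa [if_neg (hmax_not j₀ hj₀), Nat.le_zero] at this
  -- decompose the multiplier
  have hmul : (∑ i ∈ Finset.range n, (X i : MvPolynomial ℕ ℂ)) - C ((lam1 - lam2 : ℕ) : ℂ) * X n
      = (∑ e ∈ S, (X (A e) + X (Bf e))) + ∑ j ∈ F, (X (WithBot.unbotD 0 (U j).max) - X n) := by
    have h1 : ∑ i ∈ Finset.range n, (X i : MvPolynomial ℕ ℂ) = ∑ j, ∑ x ∈ U j, X x := by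
      rw [← hcover, Finset.sum_biUnion]
      intro i _ j _ hij
      exact hdisj i j hij
    have h2 : ∑ j : Fin l, ∑ x ∈ U j, (X x : MvPolynomial ℕ ℂ) =
        (∑ e ∈ S, (X (A e) + X (Bf e))) +
          ∑ j ∈ F, (X (WithBot.unbotD 0 (U j).max) : MvPolynomial ℕ ℂ) := by
      rw [Finset.sum_congr rfl (fun j _ => sum_block (U j) X), Finset.sum_add_distrib]
      congr 1
      · rw [hS, Finset.sum_sigma]
      · rw [hF, Finset.sum_filter]
    have h3 : C ((lam1 - lam2 : ℕ) : ℂ) * X n =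
        ∑ _j ∈ F, (X n : MvPolynomial ℕ ℂ) := by
      rw [Finset.sum_const, ← hodd, nsmul_eq_mul, map_natCast]
    rw [h1, h2, h3, Finset.sum_sub_distrib]
    ring
  rw [hmul, mul_add, mul_sum, mul_sum]
  have hSF : SF = ⇑SFh := rfl
  rw [hSF, map_add SFh, map_sum SFh, map_sum SFh]
  have hzero : ∀ e ∈ S, SFh (RU U * (X (A e) + X (Bf e))) = 0 := by
    intro e heS
    have hfac : RU U * (X (A e) + X (Bf e)) =
        X (A e) ^ 2 * ∏ e' ∈ S.erase e, (X (A e') - X (Bf e')) -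
        X (Bf e) ^ 2 * ∏ e' ∈ S.erase e, (X (A e') - X (Bf e')) := by
      rw [hRU, ← Finset.mul_prod_erase _ _ heS]
      ring
    rw [hfac, map_sub SFh]
    show SF _ - SF _ = 0
    rw [SF_sq_mul, SF_sq_mul, sub_zero]
  rw [Finset.sum_congr rfl hzero, Finset.sum_const_zero, zero_add]
  refine Finset.sum_congr rfl fun j hj => ?_
  show SF _ = _
  apply SF_eq_self
  intro d hd i hi
  obtain ⟨u, hu, v, hv, rfl⟩ := Finset.mem_add.mp (MvPolynomial.support_mul _ _ hd)
  obtain ⟨⟨hu1, hun, humax⟩⟩ : Nonempty _ := ⟨hRUsq u hu⟩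
  have hv' : v = Finsupp.single (WithBot.unbotD 0 (U j).max) 1 ∨ v = Finsupp.single n 1 := by
    have := MvPolynomial.support_sub ℕ (X (WithBot.unbotD 0 (U j).max)) (X n) hv
    rw [Finset.mem_union, MvPolynomial.support_X, MvPolynomial.support_X] at this
    simpa using this
  rw [Finsupp.add_apply]
  rcases hv' with rfl | rfl
  · by_cases hic : i = WithBot.unbotD 0 (U j).max
    · subst hic
      rw [Finsupp.single_eq_same, humax j hj]
    · rw [Finsupp.single_eq_of_ne' (Ne.symm hic), add_zero]
      exact hu1 i
  · by_cases hic : i = n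
    · subst hic
      rw [Finsupp.single_eq_same, hun]
    · rw [Finsupp.single_eq_of_ne' (Ne.symm hic), add_zero]
      exact hu1 i

end
end

section
/- Let L^ℓ(a,b) be the span of the polynomials R(U) over all partitionings U of {1,...,a+b} into ℓ possibly-empty blocks with exactly a−b blocks of odd cardinality. Then dim L^ℓ(a,b) ≥ dim L^ℓ(a−1,b) + dim L^ℓ(a,b−1) whenever 0 < a−b < ℓ and b > 0. -/
open MvPolynomial Finset

noncomputable section

lemma sort_insert_max {B : Finset ℕ} {m : ℕ} (h : ∀ x ∈ B, x < m) :
    (insert m B).sort (· ≤ ·) = B.sort (· ≤ ·) ++ [m] := by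
  have hm : m ∉ B := fun hmem => lt_irrefl m (h m hmem)
  apply List.Perm.eq_of_pairwise' (Finset.pairwise_sort _ _) ?_ ?_
  · rw [List.pairwise_append]
    refine ⟨Finset.pairwise_sort _ _, List.pairwise_singleton _ m, ?_⟩
    intro a ha b hb
    rw [List.mem_singleton] at hb
    subst hb
    exact le_of_lt (h a ((Finset.mem_sort _).1 ha))
  · rw [← Multiset.coe_eq_coe]
    have h1 : ((insert m B).sort (· ≤ ·) : Multiset ℕ) = (insert m B).1 := Finset.sort_eq _ _
    rw [h1, Finset.insert_val_of_notMem hm]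
    rw [← Multiset.coe_add, Finset.sort_eq, Multiset.coe_singleton, add_comm,
      Multiset.singleton_add]

lemma two_mul_half_le (c : ℕ) : 2 * (c / 2) ≤ c := by
  have := Nat.div_mul_le_self c 2; omega

lemma Rblock_insert_even {B : Finset ℕ} {m : ℕ} (h : ∀ x ∈ B, x < m)
    (he : Even B.card) : Rblock (insert m B) = Rblock B := by
  have hm : m ∉ B := fun hmem => lt_irrefl m (h m hmem)
  have hcard : (insert m B).card = B.card + 1 := Finset.card_insert_of_notMem hm
  have hdiv : (B.card + 1) / 2 = B.card / 2 := by
    obtain ⟨k, hk⟩ := he; omega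
  rw [Rblock, Rblock, hcard, hdiv, sort_insert_max h]
  apply Finset.prod_congr rfl
  intro i hi
  rw [Finset.mem_range] at hi
  have hlen : (B.sort (· ≤ ·)).length = B.card := Finset.length_sort _
  have h2 := two_mul_half_le B.card
  rw [List.getD_append _ _ _ _ (by omega), List.getD_append _ _ _ _ (by omega)]

lemma Rblock_insert_odd {B : Finset ℕ} {m : ℕ} (h : ∀ x ∈ B, x < m)
    (ho : Odd B.card) :
    Rblock (insert m B) =
      Rblock B * (X ((B.sort (· ≤ ·)).getD (B.card - 1) 0) - X m) := by
  have hm : m ∉ B := fun hmem => lt_irrefl m (h m hmem)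
  have hcard : (insert m B).card = B.card + 1 := Finset.card_insert_of_notMem hm
  obtain ⟨k, hk⟩ := ho
  have hlen : (B.sort (· ≤ ·)).length = B.card := Finset.length_sort _
  have hdiv : (B.card + 1) / 2 = B.card / 2 + 1 := by omega
  have hdiv2 : B.card / 2 = k := by omega
  rw [Rblock, Rblock, hcard, hdiv, sort_insert_max h, Finset.prod_range_succ]
  congr 1
  · apply Finset.prod_congr rfl
    intro i hi
    rw [Finset.mem_range] at hi
    rw [List.getD_append _ _ _ _ (by omega), List.getD_append _ _ _ _ (by omega)]
  · have e1 : 2 * (B.card / 2) = B.card - 1 := by omega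
    rw [e1, List.getD_append _ _ _ _ (by omega),
      List.getD_append_right _ _ _ _ (by omega)]
    have e2 : B.card - 1 + 1 - (B.sort (· ≤ ·)).length = 0 := by omega
    rw [e2]
    rfl

lemma getD_sort_mem {B : Finset ℕ} {i : ℕ} (h : i < B.card) :
    (B.sort (· ≤ ·)).getD i 0 ∈ B := by
  have hlen : (B.sort (· ≤ ·)).length = B.card := Finset.length_sort _
  rw [List.getD_eq_getElem _ _ (by omega)]
  exact (Finset.mem_sort _).1 (List.getElem_mem _)

lemma pderiv_prod_zero {ι : Type*} {s : Finset ι} {f : ι → MvPolynomial ℕ ℂ} {m : ℕ}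
    (h : ∀ i ∈ s, pderiv m (f i) = 0) : pderiv m (∏ i ∈ s, f i) = 0 := by
  classical
  induction s using Finset.induction_on with
  | empty => simp
  | insert _ _ hx ih =>
      rename_i a s'
      rw [Finset.prod_insert hx, pderiv_mul, h a (Finset.mem_insert_self _ _),
        ih fun i hi => h i (Finset.mem_insert_of_mem hi)]
      simp

lemma pderiv_Rblock_zero {B : Finset ℕ} {m : ℕ} (h : ∀ x ∈ B, x ≠ m) :
    pderiv m (Rblock B) = 0 := by
  apply pderiv_prod_zero
  intro i hi
  rw [Finset.mem_range] at hi
  have h2 := two_mul_half_le B.card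
  rw [map_sub, pderiv_X_of_ne (h _ (getD_sort_mem (by omega))),
    pderiv_X_of_ne (h _ (getD_sort_mem (by omega))), sub_zero]

lemma pderiv_RU_zero {l : ℕ} {U : Fin l → Finset ℕ} {m : ℕ}
    (h : ∀ j, ∀ x ∈ U j, x ≠ m) : pderiv m (RU U) = 0 :=
  pderiv_prod_zero fun j _ => pderiv_Rblock_zero (h j)

lemma gen_update {l n : ℕ} {U : Fin l → Finset ℕ} (j0 : Fin l)
    (hdisj : ∀ i j, i ≠ j → Disjoint (U i) (U j))
    (hunion : Finset.univ.biUnion U = Finset.range n) :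
    (∀ i j, i ≠ j →
        Disjoint (Function.update U j0 (insert n (U j0)) i)
          (Function.update U j0 (insert n (U j0)) j)) ∧
      Finset.univ.biUnion (Function.update U j0 (insert n (U j0)))
        = Finset.range (n + 1) ∧
      ∀ j, (Odd ((Function.update U j0 (insert n (U j0)) j).card) ↔
        (if j = j0 then ¬ Odd (U j).card else Odd (U j).card)) := by
  have hsub : ∀ j, U j ⊆ Finset.range n := fun j =>
    hunion ▸ Finset.subset_biUnion_of_mem U (Finset.mem_univ j)
  have hlt : ∀ j, ∀ x ∈ U j, x < n := fun j x hx => Finset.mem_range.1 (hsub j hx)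
  have hnm : ∀ j, n ∉ U j := fun j hx => lt_irrefl n (hlt j n hx)
  refine ⟨?_, ?_, ?_⟩
  · intro i j hij
    rcases eq_or_ne i j0 with rfl | hi
    · rw [Function.update_self, Function.update_of_ne hij.symm]
      exact Finset.disjoint_insert_left.2 ⟨hnm j, hdisj i j hij⟩
    · rw [Function.update_of_ne hi]
      rcases eq_or_ne j j0 with rfl | hj
      · rw [Function.update_self]
        exact Finset.disjoint_insert_right.2 ⟨hnm i, hdisj i j hij⟩
      · rw [Function.update_of_ne hj]
        exact hdisj i j hij
  · ext x
    simp only [Finset.mem_biUnion, Finset.mem_univ, true_and, Finset.mem_range]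
    constructor
    · rintro ⟨j, hj⟩
      rcases eq_or_ne j j0 with rfl | hjj
      · rw [Function.update_self, Finset.mem_insert] at hj
        rcases hj with rfl | hj
        · omega
        · have := hlt j x hj; omega
      · rw [Function.update_of_ne hjj] at hj
        have := hlt j x hj; omega
    · intro hx
      rcases eq_or_ne x n with rfl | hxn
      · exact ⟨j0, by rw [Function.update_self]; exact Finset.mem_insert_self _ _⟩
      · have : x ∈ Finset.univ.biUnion U := by
          rw [hunion]; exact Finset.mem_range.2 (by omega)
        rw [Finset.mem_biUnion] at this
        obtain ⟨j, -, hj⟩ := this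
        rcases eq_or_ne j j0 with rfl | hjj
        · exact ⟨j, by rw [Function.update_self]; exact Finset.mem_insert_of_mem hj⟩
        · exact ⟨j, by rw [Function.update_of_ne hjj]; exact hj⟩
  · intro j
    rcases eq_or_ne j j0 with rfl | hjj
    · rw [Function.update_self, Finset.card_insert_of_notMem (hnm j), if_pos rfl]
      simp [Nat.odd_add_one]
    · rw [Function.update_of_ne hjj, if_neg hjj]

lemma RU_update {l : ℕ} {U : Fin l → Finset ℕ} (j0 : Fin l) (B : Finset ℕ) :
    RU (Function.update U j0 B) = Rblock B * ∏ j ∈ Finset.univ.erase j0, Rblock (U j) := by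
  have hupd : ∀ j, Rblock (Function.update U j0 B j)
      = Function.update (fun j => Rblock (U j)) j0 (Rblock B) j := by
    intro j
    rcases eq_or_ne j j0 with rfl | hj
    · rw [Function.update_self, Function.update_self]
    · rw [Function.update_of_ne hj, Function.update_of_ne hj]
  rw [RU, Finset.prod_congr rfl (fun j _ => hupd j),
    Finset.prod_update_of_mem (Finset.mem_univ j0), Finset.sdiff_singleton_eq_erase]

lemma RU_self {l : ℕ} {U : Fin l → Finset ℕ} (j0 : Fin l) :
    RU U = Rblock (U j0) * ∏ j ∈ Finset.univ.erase j0, Rblock (U j) :=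
  (Finset.mul_prod_erase Finset.univ (fun j => Rblock (U j)) (Finset.mem_univ j0)).symm

/-- `L^ℓ(a,b)`: the span of the polynomials `R(U)` over all partitionings `U` of
`{1,…,a+b}` (0-based: `{0,…,a+b-1}`) into `ℓ` possibly-empty blocks with exactly
`a - b` blocks of odd cardinality. -/
def Lspace (l a b : ℕ) : Submodule ℂ (MvPolynomial ℕ ℂ) :=
  Submodule.span ℂ
    {p | ∃ U : Fin l → Finset ℕ,
      (∀ i j, i ≠ j → Disjoint (U i) (U j)) ∧
      Finset.univ.biUnion U = Finset.range (a + b) ∧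
      (Finset.univ.filter fun j => Odd (U j).card).card = a - b ∧
      p = RU U}

lemma lspace_fd (l a b : ℕ) : FiniteDimensional ℂ (Lspace l a b) := by
  apply FiniteDimensional.span_of_finite
  have hfin : (Set.pi Set.univ
      (fun _ : Fin l => ((Finset.range (a + b)).powerset : Set (Finset ℕ)))).Finite :=
    Set.Finite.pi fun _ => (Finset.range (a + b)).powerset.finite_toSet
  apply Set.Finite.subset (hfin.image RU)
  rintro p ⟨U, hdisj, hunion, hcount, rfl⟩
  refine Set.mem_image_of_mem _ ?_
  intro j _
  exact Finset.mem_coe.2 (Finset.mem_powerset.2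
    (hunion ▸ Finset.subset_biUnion_of_mem U (Finset.mem_univ j)))

set_option maxHeartbeats 1000000 in
set_option synthInstance.maxHeartbeats 200000 in
/-- Recursion inequality for the spaces `L^ℓ(a,b)`:
`dim L^ℓ(a,b) ≥ dim L^ℓ(a-1,b) + dim L^ℓ(a,b-1)` whenever `0 < a - b < ℓ`, `b > 0`. -/
theorem Lspace_dim_recursion
    (l a b : ℕ) (hb : 0 < b) (hba : b < a) (hl : a - b < l) :
    Module.finrank ℂ (Lspace l (a - 1) b) + Module.finrank ℂ (Lspace l a (b - 1)) ≤
      Module.finrank ℂ (Lspace l a b) := by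
  classical
  set m := a + b - 1 with hm
  set f := (pderiv (R := ℂ) (σ := ℕ) m).toLinearMap with hf
  have hfapp : ∀ q, f q = pderiv m q := fun q => rfl
  set p := Lspace l a b with hp
  -- L(a-1,b) ≤ p ⊓ ker f
  have hker : Lspace l (a - 1) b ≤ p ⊓ LinearMap.ker f := by
    apply Submodule.span_le.2
    rintro q ⟨U, hdisj, hunion, hcount, rfl⟩
    have hunion' : Finset.univ.biUnion U = Finset.range m := by
      rwa [show a - 1 + b = m by omega] at hunion
    have hcount' : (Finset.univ.filter fun j => Odd (U j).card).card = a - b - 1 := by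
      rwa [show a - 1 - b = a - b - 1 by omega] at hcount
    have hsub : ∀ j, U j ⊆ Finset.range m := fun j =>
      hunion' ▸ Finset.subset_biUnion_of_mem U (Finset.mem_univ j)
    have hlt : ∀ j, ∀ x ∈ U j, x < m := fun j x hx => Finset.mem_range.1 (hsub j hx)
    simp only [SetLike.mem_coe, Submodule.mem_inf]
    constructor
    · -- membership in Lspace l a b
      have hex : ∃ j0 : Fin l, ¬ Odd (U j0).card := by
        by_contra hcon
        push_neg at hcon
        have : (Finset.univ.filter fun j => Odd (U j).card) = Finset.univ :=
          Finset.filter_eq_self.2 fun j _ => hcon j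
        rw [this, Finset.card_univ, Fintype.card_fin] at hcount'
        omega
      obtain ⟨j0, hj0⟩ := hex
      obtain ⟨hd', hu', hodd'⟩ := gen_update j0 hdisj hunion'
      apply Submodule.subset_span
      refine ⟨Function.update U j0 (insert m (U j0)), hd', ?_, ?_, ?_⟩
      · rwa [show a + b = m + 1 by omega]
      · have hfil : (Finset.univ.filter fun j =>
            Odd ((Function.update U j0 (insert m (U j0)) j).card))
            = insert j0 (Finset.univ.filter fun j => Odd ((U j).card)) := by
          ext j
          simp only [Finset.mem_filter, Finset.mem_insert, Finset.mem_univ, true_and,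
            hodd' j]
          by_cases hj : j = j0
          · subst hj; simp [hj0]
          · simp [hj]
        rw [hfil, Finset.card_insert_of_notMem (by simp [hj0]), hcount']
        omega
      · rw [RU_update, Rblock_insert_even (hlt j0) (Nat.not_odd_iff_even.1 hj0),
          ← RU_self]
    · rw [LinearMap.mem_ker, hfapp]
      exact pderiv_RU_zero fun j x hx => Nat.ne_of_lt (hlt j x hx)
  -- L(a,b-1) ≤ map f p
  have hmap : Lspace l a (b - 1) ≤ Submodule.map f p := by
    apply Submodule.span_le.2
    rintro q ⟨U, hdisj, hunion, hcount, rfl⟩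
    have hunion' : Finset.univ.biUnion U = Finset.range m := by
      rwa [show a + (b - 1) = m by omega] at hunion
    have hcount' : (Finset.univ.filter fun j => Odd (U j).card).card = a - b + 1 := by
      rwa [show a - (b - 1) = a - b + 1 by omega] at hcount
    have hsub : ∀ j, U j ⊆ Finset.range m := fun j =>
      hunion' ▸ Finset.subset_biUnion_of_mem U (Finset.mem_univ j)
    have hlt : ∀ j, ∀ x ∈ U j, x < m := fun j x hx => Finset.mem_range.1 (hsub j hx)
    have hpos : 0 < (Finset.univ.filter fun j => Odd (U j).card).card := by omega
    obtain ⟨j0, hj0mem⟩ := Finset.card_pos.1 hpos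
    have hj0 : Odd (U j0).card := (Finset.mem_filter.1 hj0mem).2
    obtain ⟨hd', hu', hodd'⟩ := gen_update j0 hdisj hunion'
    set U' := Function.update U j0 (insert m (U j0)) with hU'
    have hgen : RU U' ∈ Lspace l a b := by
      apply Submodule.subset_span
      refine ⟨U', hd', ?_, ?_, rfl⟩
      · rwa [show a + b = m + 1 by omega]
      · have hfil : (Finset.univ.filter fun j => Odd ((U' j).card))
            = (Finset.univ.filter fun j => Odd ((U j).card)).erase j0 := by
          ext j
          simp only [Finset.mem_filter, Finset.mem_erase, Finset.mem_univ, true_and,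
            hU', hodd' j]
          by_cases hj : j = j0
          · subst hj; simp [hj0, Finset.card_insert_of_notMem (fun h => lt_irrefl m (hlt _ m h)), Nat.even_add_one]
          · simp [hj]
        rw [hfil, Finset.card_erase_of_mem hj0mem, hcount']
        omega
    have hcardpos : 0 < (U j0).card := hj0.pos
    set u := ((U j0).sort (· ≤ ·)).getD ((U j0).card - 1) 0 with hu
    have hult : u < m := hlt j0 u (getD_sort_mem (by omega))
    have hRU' : RU U' = RU U * (X u - X m) := by
      rw [hU', RU_update, Rblock_insert_odd (hlt j0) hj0, RU_self j0]
      ring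
    have hderiv : pderiv m (RU U') = -RU U := by
      rw [hRU', pderiv_mul,
        pderiv_RU_zero (fun j x hx => Nat.ne_of_lt (hlt j x hx)),
        map_sub, pderiv_X_of_ne (Nat.ne_of_lt hult), pderiv_X_self]
      ring
    refine Submodule.mem_map.2 ⟨-RU U', Submodule.neg_mem _ hgen, ?_⟩
    rw [map_neg, hfapp, hderiv, neg_neg]
  -- rank-nullity assembly
  haveI : FiniteDimensional ℂ p := lspace_fd l a b
  set g := f.domRestrict p with hg
  have hrn := LinearMap.finrank_range_add_finrank_ker g
  have hr : Submodule.map f p = LinearMap.range g := (LinearMap.range_domRestrict p f).symm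
  haveI : Module.Finite ℂ (Submodule.map f p) := by
    rw [hr]; infer_instance
  have h1 : Module.finrank ℂ (Lspace l a (b - 1))
      ≤ Module.finrank ℂ (LinearMap.range g) := by
    rw [← hr]
    exact Submodule.finrank_mono hmap
  have e : (LinearMap.ker g) ≃ₗ[ℂ] ↥(p ⊓ LinearMap.ker f) := by
    have h1 : LinearMap.ker g = Submodule.comap p.subtype (p ⊓ LinearMap.ker f) := by
      rw [LinearMap.ker_domRestrict, Submodule.comap_inf, Submodule.comap_subtype_self,
        top_inf_eq]
    rw [h1]
    exact Submodule.comapSubtypeEquivOfLe inf_le_left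
  haveI : Module.Finite ℂ ↥(p ⊓ LinearMap.ker f) :=
    Submodule.finiteDimensional_inf_left p (LinearMap.ker f)
  have h2 : Module.finrank ℂ (Lspace l (a - 1) b)
      ≤ Module.finrank ℂ (LinearMap.ker g) := by
    have he : Module.finrank ℂ (LinearMap.ker g)
        = Module.finrank ℂ ↥(p ⊓ LinearMap.ker f) := LinearEquiv.finrank_eq e
    rw [he]
    exact Submodule.finrank_mono hker
  omega


end
end
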